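/- With notation as above (edge e = wz deleted, f' = f + c with c = (f(z)+f(w))/(Σd(x)−2)), write R_{G−e}(f') = (a − c₁)/(b − c₂). Then c₁ = (f(w) − f(z))² > f(w)² + f(z)² and c₂ ≤ f(z)² + f(w)² + (f(z)² + f(w)²)/(Σ_x d(x) − 2), hence c₁/c₂ > 1/(1 + (Σ_x d(x) − 2)^{-1}). -/

import Mathlib

open Finset
open scoped Classical

noncomputable section

variable {V : Type*}

/-- Dirichlet energy `∑_{u~v} (f u - f v)^2` (each edge counted once). -/
def SimpleGraph.energyForm [Fintype V] (G : SimpleGraph V) (f : V → ℝ) : ℝ :=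
  (1/2) * ∑ x : V, ∑ y : V, if G.Adj x y then (f x - f y)^2 else 0

/-- The weighted norm `∑_x f(x)^2 d(x)`. -/
def SimpleGraph.qForm [Fintype V] (G : SimpleGraph V) (f : V → ℝ) : ℝ :=
  ∑ x : V, (f x)^2 * (G.degree x : ℝ)

/-- The spectral gap of the normalized Laplacian, via the variational characterization
`λ₁ = inf { R(f) : ∑ f(u) d(u) = 0, f ≢ 0 }`. -/
def SimpleGraph.lambda1 [Fintype V] (G : SimpleGraph V) : ℝ :=
  sInf { r | ∃ f : V → ℝ, (∑ x : V, f x * (G.degree x : ℝ)) = 0 ∧ G.qForm f ≠ 0 ∧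
    r = G.energyForm f / G.qForm f }

lemma aux_diff_sum [Fintype V] (G : SimpleGraph V) (w z : V) (hwz : G.Adj w z)
    (g : V → V → ℝ) :
    (∑ x : V, ∑ y : V, (if G.Adj x y then g x y else 0)) -
      (∑ x : V, ∑ y : V, (if (G.deleteEdges {s(w, z)}).Adj x y then g x y else 0)) =
      g w z + g z w := by
  have hne : w ≠ z := hwz.ne
  have key : ∀ x y : V, (if G.Adj x y then g x y else 0) -
      (if (G.deleteEdges {s(w, z)}).Adj x y then g x y else 0) =
      (if x = w then (if y = z then g x y else 0) else 0) +
      (if x = z then (if y = w then g x y else 0) else 0) := by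
    intro x y
    simp only [SimpleGraph.deleteEdges_adj, Set.mem_singleton_iff, Sym2.eq_iff]
    by_cases h1 : x = w ∧ y = z
    · obtain ⟨rfl, rfl⟩ := h1
      simp [hwz, hne, hne.symm]
    · by_cases h2 : x = z ∧ y = w
      · obtain ⟨rfl, rfl⟩ := h2
        simp [hwz.symm, hne, hne.symm]
      · have hns : ¬(x = w ∧ y = z ∨ x = z ∧ y = w) := by tauto
        have e1 : (if x = w then (if y = z then g x y else 0) else 0) = 0 := by
          split_ifs with ha hb
          · exact absurd ⟨ha, hb⟩ h1
          · rfl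
          · rfl
        have e2 : (if x = z then (if y = w then g x y else 0) else 0) = 0 := by
          split_ifs with ha hb
          · exact absurd ⟨ha, hb⟩ h2
          · rfl
          · rfl
        rw [e1, e2]
        by_cases hA : G.Adj x y
        · simp [hA, hns]
        · simp [hA]
  rw [← Finset.sum_sub_distrib]
  simp_rw [← Finset.sum_sub_distrib, key, Finset.sum_add_distrib]
  have e1 : ∀ a : V, (∑ y : V, if a = w then (if y = z then g a y else 0) else 0)
      = if a = w then g a z else 0 := by
    intro a; split_ifs with h <;> simp
  have e2 : ∀ a : V, (∑ y : V, if a = z then (if y = w then g a y else 0) else 0)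
      = if a = z then g a w else 0 := by
    intro a; split_ifs with h <;> simp
  simp_rw [e1, e2]
  simp

lemma aux_deg_cast [Fintype V] (G : SimpleGraph V) (x : V) :
    (G.degree x : ℝ) = ∑ y : V, if G.Adj x y then (1 : ℝ) else 0 := by
  rw [← SimpleGraph.card_neighborFinset_eq_degree, SimpleGraph.neighborFinset_eq_filter]
  rw [Finset.card_filter]
  push_cast
  rfl

lemma aux_deg_two [Fintype V] (G : SimpleGraph V) (w z : V) (hwz : G.Adj w z)
    (hconn : (G.deleteEdges {s(w, z)}).Connected) : 2 ≤ G.degree w := by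
  have hne : w ≠ z := hwz.ne
  obtain ⟨p⟩ := hconn.preconnected w z
  cases p with
  | nil => exact absurd rfl hne
  | cons h p =>
    rename_i y
    rw [SimpleGraph.deleteEdges_adj, Set.mem_singleton_iff, Sym2.eq_iff] at h
    obtain ⟨hAdj, hns⟩ := h
    have hyz : y ≠ z := by
      intro hy; exact hns (Or.inl ⟨rfl, hy⟩)
    rw [← SimpleGraph.card_neighborFinset_eq_degree]
    rw [Nat.succ_le_iff]
    rw [Finset.one_lt_card]
    exact ⟨y, by rwa [SimpleGraph.mem_neighborFinset], z,
      by rwa [SimpleGraph.mem_neighborFinset], hyz⟩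

/-- Writing `R_{G-e}(f') = (a - c₁)/(b - c₂)` for the deleted edge `e = wz` and the shifted
function `f' = f + c`, we have `c₁ = (f w - f z)² > f w² + f z²`,
`c₂ ≤ f z² + f w² + (f z² + f w²)/(∑ d(x) - 2)`, and hence
`c₁/c₂ > 1/(1 + (∑ d(x) - 2)⁻¹)`. -/
theorem rayleigh_decrement_bounds [Fintype V] (G : SimpleGraph V) (hG : G.Connected)
    (f : V → ℝ) (hf : (∑ x : V, f x * (G.degree x : ℝ)) = 0)
    (w z : V) (hwz : G.Adj w z) (hprod : f w * f z < 0)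
    (hconn : (G.deleteEdges {s(w, z)}).Connected)
    (c c₁ c₂ : ℝ)
    (hc : c = (f z + f w) / ((∑ x : V, (G.degree x : ℝ)) - 2))
    (hc1 : c₁ = G.energyForm f - (G.deleteEdges {s(w, z)}).energyForm (fun x => f x + c))
    (hc2 : c₂ = G.qForm f - (G.deleteEdges {s(w, z)}).qForm (fun x => f x + c)) :
    c₁ = (f w - f z)^2 ∧ c₁ > (f w)^2 + (f z)^2 ∧
    c₂ ≤ (f z)^2 + (f w)^2 + ((f z)^2 + (f w)^2) / ((∑ x : V, (G.degree x : ℝ)) - 2) ∧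
    c₁ / c₂ > 1 / (1 + ((∑ x : V, (G.degree x : ℝ)) - 2)⁻¹) := by
  classical
  set D : ℝ := ∑ x : V, (G.degree x : ℝ) with hD
  set G' : SimpleGraph V := G.deleteEdges {s(w, z)} with hG'
  set q : ℝ := (f z)^2 + (f w)^2 with hqdef
  set s : ℝ := f z + f w with hsdef
  -- D ≥ 4
  have hdw : 2 ≤ G.degree w := aux_deg_two G w z hwz hconn
  have hdz : 2 ≤ G.degree z := by
    apply aux_deg_two G z w hwz.symm
    rwa [Sym2.eq_swap]
  have hD4 : (4 : ℝ) ≤ D := by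
    have h1 : ∑ x ∈ ({w, z} : Finset V), G.degree x ≤ ∑ x : V, G.degree x :=
      Finset.sum_le_sum_of_subset (Finset.subset_univ _)
    rw [Finset.sum_pair hwz.ne] at h1
    have h2 : (4 : ℕ) ≤ ∑ x : V, G.degree x := by omega
    calc (4:ℝ) = ((4:ℕ):ℝ) := by norm_num
    _ ≤ ((∑ x : V, G.degree x : ℕ) : ℝ) := by exact_mod_cast h2
    _ = D := by rw [hD]; push_cast; rfl
  have hDpos : 0 < D - 2 := by linarith
  have hDne : D - 2 ≠ 0 := ne_of_gt hDpos
  -- q > 0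
  have hqpos : 0 < q := by nlinarith [sq_nonneg (f w + f z)]
  -- c₁ computation
  have hE' : G'.energyForm (fun x => f x + c) = G'.energyForm f := by
    unfold SimpleGraph.energyForm
    congr 1
    apply Finset.sum_congr rfl; intro x _
    apply Finset.sum_congr rfl; intro y _
    congr 1
    ring_nf
  have hc1' : c₁ = (f w - f z)^2 := by
    rw [hc1, hE']
    unfold SimpleGraph.energyForm
    rw [← mul_sub]
    have h := aux_diff_sum G w z hwz (fun x y => (f x - f y)^2)
    refine (congrArg (HMul.hMul (1/2:ℝ)) (?_ : _ = (f w - f z)^2 + (f z - f w)^2)).trans ?_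
    · convert h
    · ring
  have hc1gt : c₁ > (f w)^2 + (f z)^2 := by
    rw [hc1']; nlinarith
  -- qForm as double sum
  have hqsum : ∀ (H : SimpleGraph V) (g : V → ℝ),
      H.qForm g = ∑ x : V, ∑ y : V, if H.Adj x y then (g x)^2 else 0 := by
    intro H g
    unfold SimpleGraph.qForm
    apply Finset.sum_congr rfl; intro x _
    rw [aux_deg_cast, Finset.mul_sum]
    apply Finset.sum_congr rfl; intro y _
    split_ifs <;> simp
  have hdel : G.qForm (fun x => f x + c) - G'.qForm (fun x => f x + c)
      = (f w + c)^2 + (f z + c)^2 := by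
    rw [hqsum G, hqsum G']
    convert aux_diff_sum G w z hwz (fun x _ => (f x + c)^2)
  have hshift : G.qForm (fun x => f x + c) = G.qForm f + c^2 * D := by
    unfold SimpleGraph.qForm
    have : ∀ x : V, (f x + c)^2 * (G.degree x : ℝ) =
        (f x)^2 * (G.degree x : ℝ) + (2*c) * (f x * (G.degree x : ℝ))
          + c^2 * (G.degree x : ℝ) := by intro x; ring
    simp_rw [this]
    rw [Finset.sum_add_distrib, Finset.sum_add_distrib, ← Finset.mul_sum, ← Finset.mul_sum, hf]
    ring
  have hc2' : c₂ = q + s^2 / (D - 2) := by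
    have : c₂ = (f w + c)^2 + (f z + c)^2 - c^2 * D := by
      rw [hc2]; rw [show G.qForm f = G.qForm (fun x => f x + c) - c^2 * D by rw [hshift]; ring]
      linarith [hdel]
    rw [this, hc]
    field_simp
    ring
  have hs2q : s^2 ≤ q := by rw [hsdef, hqdef]; nlinarith
  have hc2le : c₂ ≤ q + q / (D - 2) := by
    rw [hc2']
    have : s^2 / (D-2) ≤ q / (D-2) := by gcongr
    linarith
  have hc2pos : 0 < c₂ := by
    rw [hc2']
    have : 0 ≤ s^2 / (D-2) := by positivity
    linarith
  refine ⟨hc1', hc1gt, hc2le, ?_⟩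
  -- final inequality
  have hεpos : 0 < (D - 2)⁻¹ := by positivity
  have h1e : (0:ℝ) < 1 + (D-2)⁻¹ := by linarith
  have hqmul : q * (1 + (D-2)⁻¹) = q + q / (D - 2) := by
    rw [div_eq_mul_inv]; ring
  have key : 1 / (1 + (D-2)⁻¹) = q / (q * (1 + (D-2)⁻¹)) := by
    field_simp
  rw [gt_iff_lt, key]
  calc q / (q * (1 + (D-2)⁻¹)) ≤ q / c₂ := by
        apply div_le_div_of_nonneg_left (le_of_lt hqpos) hc2pos
        rw [hqmul]; exact hc2le
    _ < c₁ / c₂ := by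
        apply (div_lt_div_iff_of_pos_right hc2pos).mpr
        rw [hqdef]; linarith
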